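/- Let w : [0,∞) → ℝ be bounded, continuous, nondecreasing and nonpositive, and write F(z) = g(z) + λ₀·(Kw)(z) and ρ(z) = 2/(μ²·z²·B(z)), where B(z) = ψ'(z)·η(z) − ψ(z)·η'(z) is the (strictly positive) Wronskian of ψ and η. Let φ* > 0 satisfy ∫_0^{φ*} ψ(z)·ρ(z)·F(z) dz = 0 and ∫_0^{φ} ψ(z)·ρ(z)·F(z) dz < 0 for every φ ∈ (0, φ*). Define H(φ) = ψ(φ)·∫_φ^{φ*} η(z)·ρ(z)·F(z) dz + η(φ)·∫_0^φ ψ(z)·ρ(z)·F(z) dz for 0 < φ ≤ φ*, and H(φ) = 0 for φ ≥ φ*. Then all the integrals converge and: (i) H is continuously differentiable on (0,∞) and twice continuously differentiable on (0,∞)∖{φ*}; (ii) H(φ*) = H'(φ*) = 0 (smooth fit); (iii) H(φ) < 0 for every φ ∈ (0, φ*); (iv) (μ²/2)·φ²·H''(φ) + (λ + a·φ)·H'(φ) − (λ + λ₀)·H(φ) + F(φ) = 0 for every φ ∈ (0, φ*); (v) F(φ) > 0 for every φ ∈ (φ*, ∞). -/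

import Mathlib

open MeasureTheory

/-- The forcing term `F(z) = g(z) + λ₀ (Kw)(z) = z - λ/c + λ₀ ∫_E w((λ₁/λ₀) f(e) z) ν₀(de)`. -/
noncomputable def forcingF {E : Type*} [MeasurableSpace E] (ν₀ : Measure E)
    (f : E → ℝ) (lam lam0 lam1 c : ℝ) (w : ℝ → ℝ) (z : ℝ) : ℝ :=
  z - lam / c + lam0 * ∫ e, w (lam1 / lam0 * f e * z) ∂ν₀

/-- The weight `ρ(z) = 2 / (μ² z² B(z))`, where `B = ψ' η - ψ η'` is the Wronskian. -/
noncomputable def rhoWeight (μ : ℝ) (ψ η : ℝ → ℝ) (z : ℝ) : ℝ :=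
  2 / (μ ^ 2 * z ^ 2 * (deriv ψ z * η z - ψ z * deriv η z))

/-- The candidate value function of Lemma 4.3:
`H(φ) = ψ(φ) ∫_φ^{φ*} η ρ F + η(φ) ∫_0^φ ψ ρ F` for `0 < φ ≤ φ*`, and `H(φ) = 0` for `φ ≥ φ*`. -/
noncomputable def Hsol {E : Type*} [MeasurableSpace E] (ν₀ : Measure E)
    (f : E → ℝ) (lam lam0 lam1 c μ : ℝ) (w ψ η : ℝ → ℝ) (φs φ : ℝ) : ℝ :=
  if φ ≤ φs then
    ψ φ * (∫ z in Set.Ioo φ φs,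
        η z * rhoWeight μ ψ η z * forcingF ν₀ f lam lam0 lam1 c w z) +
    η φ * (∫ z in Set.Ioo (0 : ℝ) φ,
        ψ z * rhoWeight μ ψ η z * forcingF ν₀ f lam lam0 lam1 c w z)
  else 0

lemma aux_pow_div_fact_le_exp (x : ℝ) (hx : 0 ≤ x) (n : ℕ) :
    x ^ n / n.factorial ≤ Real.exp x := by
  calc x ^ n / n.factorial ≤ ∑ i ∈ Finset.range (n+1), x ^ i / i.factorial := by
        refine Finset.single_le_sum (f := fun i => x ^ i / (i.factorial : ℝ)) ?_
          (Finset.self_mem_range_succ n)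
        intro i _; positivity
    _ ≤ Real.exp x := Real.sum_le_exp_of_nonneg hx _

lemma aux_rpow_exp_bound (β m b : ℝ) (hβ : 0 < β) (hb : 0 < b) :
    ∃ K : ℝ, 0 ≤ K ∧ ∀ z : ℝ, 0 < z → z ≤ b → z ^ m * Real.exp (-(β / z)) ≤ K := by
  set n : ℕ := ⌈|m|⌉₊ + 1 with hn
  have hmn : 0 ≤ m + n := by
    have h1 : -m ≤ |m| := neg_le_abs m
    have h2 : |m| ≤ (n : ℝ) := by
      have := Nat.le_ceil |m|
      push_cast [hn]; linarith
    linarith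
  refine ⟨(n.factorial : ℝ) / β ^ n * b ^ (m + n), by positivity, ?_⟩
  intro z hz hzb
  have hβz : 0 < β / z := by positivity
  have h1 : (β / z) ^ n / n.factorial ≤ Real.exp (β / z) :=
    aux_pow_div_fact_le_exp _ hβz.le n
  have hpow : 0 < (β / z) ^ n / n.factorial := by positivity
  have h2 : Real.exp (-(β / z)) ≤ ((β / z) ^ n / n.factorial)⁻¹ := by
    rw [Real.exp_neg]
    exact inv_anti₀ hpow h1
  have h3 : ((β / z) ^ n / n.factorial)⁻¹ = (n.factorial : ℝ) / β ^ n * z ^ n := by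
    field_simp
    rw [← mul_pow, div_mul_cancel₀ β hz.ne']
  calc z ^ m * Real.exp (-(β / z)) ≤ z ^ m * ((n.factorial : ℝ) / β ^ n * z ^ n) := by
        rw [← h3]
        exact mul_le_mul_of_nonneg_left h2 (Real.rpow_nonneg hz.le m)
    _ = (n.factorial : ℝ) / β ^ n * z ^ (m + n) := by
        rw [Real.rpow_add hz, Real.rpow_natCast]; ring
    _ ≤ (n.factorial : ℝ) / β ^ n * b ^ (m + n) := by
        refine mul_le_mul_of_nonneg_left ?_ (by positivity)
        exact Real.rpow_le_rpow hz.le hzb hmn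

/-- Lemma 4.3: the explicit solution `H` of the one-step variational inequalities.
All integrals converge; `H` is `C¹` on `(0,∞)` and `C²` off `φ*` (smooth fit
`H(φ*) = H'(φ*) = 0`); `H < 0` on `(0, φ*)`; `H` solves
`(μ²/2) φ² H'' + (λ + a φ) H' - (λ + λ₀) H + F = 0` on `(0, φ*)`; and `F > 0` on `(φ*, ∞)`. -/
theorem lemma_4_3
    {E : Type*} [MeasurableSpace E] (ν₀ : Measure E) [IsProbabilityMeasure ν₀]
    (f : E → ℝ) (hf : Measurable f) (hf0 : ∀ z, 0 ≤ f z)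
    (lam lam0 lam1 c : ℝ)
    (hlam : 0 < lam) (hlam0 : 0 < lam0) (hlam1 : 0 < lam1) (hc : 0 < c)
    (μ a : ℝ) (hμ : μ ≠ 0)
    (w : ℝ → ℝ)
    (hwbdd : ∃ M : ℝ, ∀ x : ℝ, 0 ≤ x → |w x| ≤ M)
    (hwcont : ContinuousOn w (Set.Ici (0 : ℝ)))
    (hwmono : ∀ x y : ℝ, 0 ≤ x → x ≤ y → w x ≤ w y)
    (hwnp : ∀ x : ℝ, 0 ≤ x → w x ≤ 0)
    (ψ η : ℝ → ℝ)
    (hψsmooth : ContDiffOn ℝ 2 ψ (Set.Ioi (0 : ℝ)))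
    (hηsmooth : ContDiffOn ℝ 2 η (Set.Ioi (0 : ℝ)))
    (hψpos : ∀ y : ℝ, 0 < y → 0 < ψ y)
    (hηpos : ∀ y : ℝ, 0 < y → 0 < η y)
    (hψmono : ∀ x y : ℝ, 0 < x → x ≤ y → ψ x ≤ ψ y)
    (hηanti : ∀ x y : ℝ, 0 < x → x ≤ y → η y ≤ η x)
    (hψode : ∀ y : ℝ, 0 < y →
      μ ^ 2 / 2 * y ^ 2 * deriv (deriv ψ) y + (lam + a * y) * deriv ψ y
        = (lam + lam0) * ψ y)
    (hηode : ∀ y : ℝ, 0 < y →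
      μ ^ 2 / 2 * y ^ 2 * deriv (deriv η) y + (lam + a * y) * deriv η y
        = (lam + lam0) * η y)
    (hBpos : ∀ y : ℝ, 0 < y → 0 < deriv ψ y * η y - ψ y * deriv η y)
    (hBscale : ∃ C : ℝ, 0 < C ∧ ∀ y : ℝ, 0 < y →
      deriv ψ y * η y - ψ y * deriv η y =
        C * y ^ (-(2 * a / μ ^ 2)) * Real.exp ((2 * lam / μ ^ 2) / y))
    (φs : ℝ) (hφs : 0 < φs)
    (hroot : (∫ z in Set.Ioo (0 : ℝ) φs,
        ψ z * rhoWeight μ ψ η z * forcingF ν₀ f lam lam0 lam1 c w z) = 0)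
    (hneg : ∀ φ : ℝ, 0 < φ → φ < φs →
      (∫ z in Set.Ioo (0 : ℝ) φ,
        ψ z * rhoWeight μ ψ η z * forcingF ν₀ f lam lam0 lam1 c w z) < 0) :
    (∀ φ : ℝ, 0 < φ → φ ≤ φs →
      IntegrableOn
        (fun z => ψ z * rhoWeight μ ψ η z * forcingF ν₀ f lam lam0 lam1 c w z)
        (Set.Ioo (0 : ℝ) φ) ∧
      IntegrableOn
        (fun z => η z * rhoWeight μ ψ η z * forcingF ν₀ f lam lam0 lam1 c w z)
        (Set.Ioo φ φs)) ∧
    ContDiffOn ℝ 1 (Hsol ν₀ f lam lam0 lam1 c μ w ψ η φs) (Set.Ioi (0 : ℝ)) ∧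
    ContDiffOn ℝ 2 (Hsol ν₀ f lam lam0 lam1 c μ w ψ η φs)
      (Set.Ioi (0 : ℝ) \ {φs}) ∧
    Hsol ν₀ f lam lam0 lam1 c μ w ψ η φs φs = 0 ∧
    deriv (Hsol ν₀ f lam lam0 lam1 c μ w ψ η φs) φs = 0 ∧
    (∀ φ : ℝ, 0 < φ → φ < φs →
      Hsol ν₀ f lam lam0 lam1 c μ w ψ η φs φ < 0) ∧
    (∀ φ : ℝ, 0 < φ → φ < φs →
      μ ^ 2 / 2 * φ ^ 2 *
          deriv (deriv (Hsol ν₀ f lam lam0 lam1 c μ w ψ η φs)) φ +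
        (lam + a * φ) * deriv (Hsol ν₀ f lam lam0 lam1 c μ w ψ η φs) φ -
        (lam + lam0) * Hsol ν₀ f lam lam0 lam1 c μ w ψ η φs φ +
        forcingF ν₀ f lam lam0 lam1 c w φ = 0) ∧
    (∀ φ : ℝ, φs < φ → 0 < forcingF ν₀ f lam lam0 lam1 c w φ) := by
  classical
  obtain ⟨M₀, hM₀⟩ := hwbdd
  have hM0 : 0 ≤ M₀ := (abs_nonneg _).trans (hM₀ 0 le_rfl)
  -- the continuous bounded extension of `w`
  set w' : ℝ → ℝ := fun x => w (max x 0) with hw'def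
  have hw'cont : Continuous w' :=
    hwcont.comp_continuous (continuous_id.max continuous_const)
      (fun x => Set.mem_Ici.2 (le_max_right _ _))
  have hw'eq : ∀ x : ℝ, 0 ≤ x → w' x = w x := fun x hx => by
    simp [hw'def, max_eq_left hx]
  have hw'bd : ∀ x : ℝ, |w' x| ≤ M₀ := fun x => hM₀ _ (le_max_right _ _)
  set c1 : ℝ := lam1 / lam0 with hc1def
  have hc1 : 0 < c1 := div_pos hlam1 hlam0
  have hmeasz : ∀ z : ℝ, Measurable fun e => w' (c1 * f e * z) := fun z =>
    hw'cont.measurable.comp ((hf.const_mul c1).mul_const z)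
  have hintz : ∀ z : ℝ, Integrable (fun e => w' (c1 * f e * z)) ν₀ := fun z =>
    (integrable_const M₀).mono' (hmeasz z).aestronglyMeasurable
      (Filter.Eventually.of_forall fun e => by
        simpa [Real.norm_eq_abs] using hw'bd (c1 * f e * z))
  set G : ℝ → ℝ := fun z => z - lam / c + lam0 * ∫ e, w' (c1 * f e * z) ∂ν₀ with hGdef
  have hGcont : Continuous G := by
    have h1 : Continuous fun z : ℝ => ∫ e, w' (c1 * f e * z) ∂ν₀ := by
      apply continuous_of_dominated (bound := fun _ => M₀)
        (fun z => (hmeasz z).aestronglyMeasurable)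
        (fun z => Filter.Eventually.of_forall fun e => by
          simpa [Real.norm_eq_abs] using hw'bd (c1 * f e * z))
        (integrable_const M₀)
      exact Filter.Eventually.of_forall fun e =>
        hw'cont.comp (continuous_const.mul continuous_id)
    exact ((continuous_id.sub continuous_const).add (continuous_const.mul h1))
  have hFeqG : ∀ z : ℝ, 0 ≤ z → forcingF ν₀ f lam lam0 lam1 c w z = G z := by
    intro z hz
    unfold forcingF
    simp only [hGdef]
    congr 1
    congr 1
    apply integral_congr_ae
    filter_upwards with e
    rw [hw'eq _ (mul_nonneg (mul_nonneg hc1.le (hf0 e)) hz)]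
  have hGbd : ∀ z : ℝ, |G z| ≤ |z| + lam / c + lam0 * M₀ := by
    intro z
    have h1 : |∫ e, w' (c1 * f e * z) ∂ν₀| ≤ M₀ := by
      have := norm_integral_le_of_norm_le_const (μ := ν₀)
        (f := fun e => w' (c1 * f e * z)) (C := M₀)
        (Filter.Eventually.of_forall fun e => by
          simpa [Real.norm_eq_abs] using hw'bd (c1 * f e * z))
      simpa [Real.norm_eq_abs] using this
    calc |G z| ≤ |z - lam / c| + |lam0 * ∫ e, w' (c1 * f e * z) ∂ν₀| := abs_add_le _ _
      _ ≤ (|z| + lam / c) + lam0 * M₀ := by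
          gcongr
          · calc |z - lam / c| ≤ |z| + |lam / c| := abs_sub _ _
              _ = |z| + lam / c := by
                  congr 1
                  exact abs_of_nonneg (by positivity)
          · rw [abs_mul, abs_of_nonneg hlam0.le]
            exact mul_le_mul_of_nonneg_left h1 hlam0.le
      _ = |z| + lam / c + lam0 * M₀ := by ring
  have hGmono : ∀ x y : ℝ, 0 ≤ x → x ≤ y → G x + (y - x) ≤ G y := by
    intro x y hx hxy
    have h1 : (∫ e, w' (c1 * f e * x) ∂ν₀) ≤ ∫ e, w' (c1 * f e * y) ∂ν₀ := by
      refine integral_mono (hintz x) (hintz y) fun e => ?_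
      have hax : 0 ≤ c1 * f e * x := mul_nonneg (mul_nonneg hc1.le (hf0 e)) hx
      have hay : c1 * f e * x ≤ c1 * f e * y :=
        mul_le_mul_of_nonneg_left hxy (mul_nonneg hc1.le (hf0 e))
      rw [hw'eq _ hax, hw'eq _ (hax.trans hay)]
      exact hwmono _ _ hax hay
    have := mul_le_mul_of_nonneg_left h1 hlam0.le
    simp only [hGdef]
    linarith
  -- smoothness facts about ψ, η
  have h12 : (1 : WithTop ℕ∞) + 1 ≤ 2 := by norm_num
  have h01 : (0 : WithTop ℕ∞) + 1 ≤ 1 := by norm_num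
  have hψ'C1 : ContDiffOn ℝ 1 (deriv ψ) (Set.Ioi 0) :=
    hψsmooth.deriv_of_isOpen isOpen_Ioi h12
  have hη'C1 : ContDiffOn ℝ 1 (deriv η) (Set.Ioi 0) :=
    hηsmooth.deriv_of_isOpen isOpen_Ioi h12
  have hψ'cont : ContinuousOn (deriv ψ) (Set.Ioi 0) := hψ'C1.continuousOn
  have hη'cont : ContinuousOn (deriv η) (Set.Ioi 0) := hη'C1.continuousOn
  have hψ''cont : ContinuousOn (deriv (deriv ψ)) (Set.Ioi 0) :=
    (hψ'C1.deriv_of_isOpen isOpen_Ioi h01).continuousOn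
  have hη''cont : ContinuousOn (deriv (deriv η)) (Set.Ioi 0) :=
    (hη'C1.deriv_of_isOpen isOpen_Ioi h01).continuousOn
  have hψd : ∀ y : ℝ, 0 < y → HasDerivAt ψ (deriv ψ y) y := fun y hy =>
    ((hψsmooth.differentiableOn (by norm_num)).differentiableAt
      (isOpen_Ioi.mem_nhds hy)).hasDerivAt
  have hηd : ∀ y : ℝ, 0 < y → HasDerivAt η (deriv η y) y := fun y hy =>
    ((hηsmooth.differentiableOn (by norm_num)).differentiableAt
      (isOpen_Ioi.mem_nhds hy)).hasDerivAt
  have hψ'd : ∀ y : ℝ, 0 < y → HasDerivAt (deriv ψ) (deriv (deriv ψ) y) y := fun y hy =>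
    ((hψ'C1.differentiableOn (by norm_num)).differentiableAt
      (isOpen_Ioi.mem_nhds hy)).hasDerivAt
  have hη'd : ∀ y : ℝ, 0 < y → HasDerivAt (deriv η) (deriv (deriv η) y) y := fun y hy =>
    ((hη'C1.differentiableOn (by norm_num)).differentiableAt
      (isOpen_Ioi.mem_nhds hy)).hasDerivAt
  have hψcont : ContinuousOn ψ (Set.Ioi 0) := hψsmooth.continuousOn
  have hηcont : ContinuousOn η (Set.Ioi 0) := hηsmooth.continuousOn
  -- the weight ρ
  have hμ2 : (0:ℝ) < μ ^ 2 := by positivity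
  have hρpos : ∀ z : ℝ, 0 < z → 0 < rhoWeight μ ψ η z := by
    intro z hz
    unfold rhoWeight
    have := hBpos z hz
    positivity
  have hρcont : ContinuousOn (rhoWeight μ ψ η) (Set.Ioi 0) := by
    unfold rhoWeight
    apply continuousOn_const.div
    · exact (continuousOn_const.mul (continuousOn_pow 2)).mul
        ((hψ'cont.mul hηcont).sub (hψcont.mul hη'cont))
    · intro z hz
      have h1 := hBpos z hz
      have hz' : (0:ℝ) < z := hz
      positivity
  have hFcont : ContinuousOn (forcingF ν₀ f lam lam0 lam1 c w) (Set.Ioi 0) :=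
    hGcont.continuousOn.congr fun z hz => hFeqG z (le_of_lt hz)
  set g1 : ℝ → ℝ := fun z => ψ z * rhoWeight μ ψ η z * forcingF ν₀ f lam lam0 lam1 c w z
    with hg1def
  set g2 : ℝ → ℝ := fun z => η z * rhoWeight μ ψ η z * forcingF ν₀ f lam lam0 lam1 c w z
    with hg2def
  have hg1cont : ContinuousOn g1 (Set.Ioi 0) := (hψcont.mul hρcont).mul hFcont
  have hg2cont : ContinuousOn g2 (Set.Ioi 0) := (hηcont.mul hρcont).mul hFcont
  -- integrability of g1 near 0
  obtain ⟨CB, hCB, hCBeq⟩ := hBscale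
  have hβpos : (0:ℝ) < 2 * lam / μ ^ 2 := by positivity
  have hg1int : ∀ b : ℝ, 0 < b → IntegrableOn g1 (Set.Ioo 0 b) := by
    intro b hb
    obtain ⟨K, hK, hKle⟩ := aux_rpow_exp_bound (2 * lam / μ ^ 2) (2 * a / μ ^ 2 - 2) b hβpos hb
    set Kb : ℝ := ψ b * (2 / (μ ^ 2 * CB) * K) * (b + lam / c + lam0 * M₀) with hKbdef
    refine ⟨(hg1cont.mono (fun z hz => hz.1)).aestronglyMeasurable measurableSet_Ioo,
      HasFiniteIntegral.restrict_of_bounded (C := Kb) measure_Ioo_lt_top ?_⟩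
    · rw [ae_restrict_iff' measurableSet_Ioo]
      filter_upwards with z hz
      obtain ⟨hz0, hzb⟩ := hz
      have hρval : rhoWeight μ ψ η z ≤ 2 / (μ ^ 2 * CB) * K := by
        have hBz := hCBeq z hz0
        have hA : (0:ℝ) < z ^ (2 * a / μ ^ 2) := Real.rpow_pos_of_pos hz0 _
        have hneg' : z ^ (-(2 * a / μ ^ 2)) = (z ^ (2 * a / μ ^ 2))⁻¹ := Real.rpow_neg hz0.le _
        have hsplit : z ^ (2 * a / μ ^ 2 - 2)
            = z ^ (2 * a / μ ^ 2) / z ^ (2:ℕ) := by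
          rw [Real.rpow_sub hz0]
          congr 1
          rw [show (2:ℝ) = ((2:ℕ):ℝ) by norm_num, Real.rpow_natCast]
        have key : rhoWeight μ ψ η z
            = 2 / (μ ^ 2 * CB) * (z ^ (2 * a / μ ^ 2 - 2) * Real.exp (-(2 * lam / μ ^ 2 / z))) := by
          unfold rhoWeight
          rw [hBz, hneg', hsplit, Real.exp_neg]
          have e1 : (0:ℝ) < Real.exp (2 * lam / μ ^ 2 / z) := Real.exp_pos _
          have hzne : z ≠ 0 := ne_of_gt hz0
          have hAne : z ^ (2 * a / μ ^ 2) ≠ 0 := ne_of_gt hA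
          have e1ne : Real.exp (2 * lam / μ ^ 2 / z) ≠ 0 := ne_of_gt e1
          field_simp
        rw [key]
        have := hKle z hz0 hzb.le
        calc 2 / (μ ^ 2 * CB) * (z ^ (2 * a / μ ^ 2 - 2) * Real.exp (-(2 * lam / μ ^ 2 / z)))
            ≤ 2 / (μ ^ 2 * CB) * K := by
              apply mul_le_mul_of_nonneg_left _ (by positivity)
              simpa [div_div] using hKle z hz0 hzb.le
          _ = 2 / (μ ^ 2 * CB) * K := rfl
      have hψz : ψ z ≤ ψ b := hψmono z b hz0 hzb.le
      have hFz : |forcingF ν₀ f lam lam0 lam1 c w z| ≤ b + lam / c + lam0 * M₀ := by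
        rw [hFeqG z hz0.le]
        calc |G z| ≤ |z| + lam / c + lam0 * M₀ := hGbd z
          _ ≤ b + lam / c + lam0 * M₀ := by
              have : |z| ≤ b := by
                rw [abs_of_pos hz0]; exact hzb.le
              linarith
      have hρz := hρpos z hz0
      have hψzpos := hψpos z hz0
      calc ‖g1 z‖ = ψ z * rhoWeight μ ψ η z * |forcingF ν₀ f lam lam0 lam1 c w z| := by
            simp only [hg1def, Real.norm_eq_abs, abs_mul]
            rw [abs_of_pos hψzpos, abs_of_pos hρz]
        _ ≤ ψ b * (2 / (μ ^ 2 * CB) * K) * (b + lam / c + lam0 * M₀) := by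
            apply mul_le_mul
            · apply mul_le_mul hψz hρval hρz.le (le_trans hψzpos.le hψz)
            · exact hFz
            · exact abs_nonneg _
            · exact mul_nonneg (hψpos b hb).le (by positivity)
        _ = Kb := rfl
  have hg2int : ∀ u : ℝ, 0 < u → IntegrableOn g2 (Set.Ioo u φs) := by
    intro u hu
    rcases le_or_gt φs u with h | h
    · rw [Set.Ioo_eq_empty (by exact fun hlt => absurd (h.trans_lt hlt) (lt_irrefl _))]
      exact integrableOn_empty
    · have : Set.Ioo u φs ⊆ Set.Icc u φs := Set.Ioo_subset_Icc_self
      refine IntegrableOn.mono_set ?_ this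
      apply (hg2cont.mono ?_).integrableOn_Icc
      intro z hz
      exact lt_of_lt_of_le hu hz.1
  -- interval integrability of g1, g2 on subintervals of (0, ∞)
  have hg1ii : ∀ x y : ℝ, 0 < x → 0 < y → IntervalIntegrable g1 volume x y := by
    intro x y hx hy
    apply (hg1cont.mono ?_).intervalIntegrable
    intro z hz
    have := Set.mem_uIcc.1 hz
    rcases this with h | h
    · exact lt_of_lt_of_le hx h.1
    · exact lt_of_lt_of_le hy h.1
  have hg2ii : ∀ x y : ℝ, 0 < x → 0 < y → IntervalIntegrable g2 volume x y := by
    intro x y hx hy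
    apply (hg2cont.mono ?_).intervalIntegrable
    intro z hz
    rcases Set.mem_uIcc.1 hz with h | h
    · exact lt_of_lt_of_le hx h.1
    · exact lt_of_lt_of_le hy h.1
  -- the primitives
  set I : ℝ → ℝ := fun u => ∫ z in Set.Ioo (0:ℝ) u, g1 z with hIdef
  set J' : ℝ → ℝ := fun u => -∫ z in φs..u, g2 z with hJ'def
  have hg1intIoc : ∀ b : ℝ, 0 < b → IntegrableOn g1 (Set.Ioc 0 b) := by
    intro b hb
    rw [integrableOn_Ioc_iff_integrableOn_Ioo]
    exact hg1int b hb
  have hIsplit : ∀ b u : ℝ, 0 < b → b ≤ u → I u = I b + ∫ t in b..u, g1 t := by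
    intro b u hb hbu
    have hu : 0 < u := lt_of_lt_of_le hb hbu
    have h1 : I u = ∫ z in Set.Ioc (0:ℝ) u, g1 z := (integral_Ioc_eq_integral_Ioo).symm
    have h2 : I b = ∫ z in Set.Ioc (0:ℝ) b, g1 z := (integral_Ioc_eq_integral_Ioo).symm
    have h3 : (∫ t in b..u, g1 t) = ∫ z in Set.Ioc b u, g1 z :=
      intervalIntegral.integral_of_le hbu
    rw [h1, h2, h3]
    rw [← setIntegral_union (Set.Ioc_disjoint_Ioc_of_le le_rfl) measurableSet_Ioc
      ((hg1intIoc b hb))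
      ((hg1intIoc u hu).mono_set (Set.Ioc_subset_Ioc_left hb.le))]
    rw [Set.Ioc_union_Ioc_eq_Ioc hb.le hbu]
  have hId : ∀ u : ℝ, 0 < u → HasDerivAt I (g1 u) u := by
    intro u hu
    set b : ℝ := u / 2 with hbdef
    have hb : 0 < b := by positivity
    have hbu : b < u := by
      rw [hbdef]; linarith
    have hmeas : StronglyMeasurableAtFilter g1 (nhds u) volume :=
      hg1cont.stronglyMeasurableAtFilter isOpen_Ioi _ hu
    have hca : ContinuousAt g1 u :=
      hg1cont.continuousAt (isOpen_Ioi.mem_nhds hu)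
    have hd : HasDerivAt (fun v => I b + ∫ t in b..v, g1 t) (g1 u) u :=
      (intervalIntegral.integral_hasDerivAt_right (hg1ii b u hb hu) hmeas hca).const_add (I b)
    apply hd.congr_of_eventuallyEq
    filter_upwards [eventually_gt_nhds hbu] with v hv
    rw [hIsplit b v hb hv.le]
  have hJ'd : ∀ u : ℝ, 0 < u → HasDerivAt J' (-(g2 u)) u := by
    intro u hu
    have hmeas : StronglyMeasurableAtFilter g2 (nhds u) volume :=
      hg2cont.stronglyMeasurableAtFilter isOpen_Ioi _ hu
    have hca : ContinuousAt g2 u :=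
      hg2cont.continuousAt (isOpen_Ioi.mem_nhds hu)
    exact (intervalIntegral.integral_hasDerivAt_right (hg2ii φs u hφs hu) hmeas hca).neg
  have hJeq : ∀ u : ℝ, 0 < u → u ≤ φs → (∫ z in Set.Ioo u φs, g2 z) = J' u := by
    intro u hu huφ
    simp only [hJ'def]
    rw [← intervalIntegral.integral_symm]
    rw [intervalIntegral.integral_of_le huφ, integral_Ioc_eq_integral_Ioo]
  have hI0 : I φs = 0 := hroot
  have hJ'0 : J' φs = 0 := by simp [hJ'def]
  -- the smooth representative
  set Hfun : ℝ → ℝ := fun u => ψ u * J' u + η u * I u with hHfdef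
  have hHeq : ∀ u : ℝ, 0 < u →
      Hsol ν₀ f lam lam0 lam1 c μ w ψ η φs u = Hfun (min u φs) := by
    intro u hu
    simp only [Hsol]
    rw [← hg1def, ← hg2def]
    rcases le_or_gt u φs with h | h
    · rw [if_pos h, min_eq_left h]
      simp only [hHfdef]
      rw [hJeq u hu h]
    · rw [if_neg (not_le.2 h), min_eq_right h.le]
      simp only [hHfdef]
      rw [hJ'0, hI0]
      ring
  have hHφs : Hsol ν₀ f lam lam0 lam1 c μ w ψ η φs φs = 0 := by
    rw [hHeq φs hφs, min_self]
    simp only [hHfdef]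
    rw [hJ'0, hI0]
    ring
  have hHIci : ∀ v : ℝ, v ∈ Set.Ici φs → Hsol ν₀ f lam lam0 lam1 c μ w ψ η φs v = 0 := by
    intro v hv
    rcases eq_or_lt_of_le (Set.mem_Ici.1 hv) with h | h
    · rw [← h]; exact hHφs
    · simp only [Hsol]
      rw [if_neg (not_le.2 h)]
  set Dd : ℝ → ℝ := fun v => deriv ψ v * J' v + deriv η v * I v with hDddef
  have hDd0 : Dd φs = 0 := by
    simp only [hDddef]
    rw [hJ'0, hI0]; ring
  have hHfd : ∀ u : ℝ, 0 < u → HasDerivAt Hfun (Dd u) u := by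
    intro u hu
    have h1 := ((hψd u hu).mul (hJ'd u hu)).add ((hηd u hu).mul (hId u hu))
    refine h1.congr_deriv ?_
    simp only [hDddef, hg1def, hg2def]
    ring
  set D : ℝ → ℝ := fun u => Dd (min u φs) with hDdef
  have hHd : ∀ u : ℝ, 0 < u →
      HasDerivAt (Hsol ν₀ f lam lam0 lam1 c μ w ψ η φs) (D u) u := by
    intro u hu
    rcases lt_trichotomy u φs with h | h | h
    · have hDu : D u = Dd u := by simp only [hDdef]; rw [min_eq_left h.le]
      rw [hDu]
      apply (hHfd u hu).congr_of_eventuallyEq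
      filter_upwards [isOpen_Ioo.mem_nhds (⟨hu, h⟩ : u ∈ Set.Ioo (0:ℝ) φs)] with v hv
      rw [hHeq v hv.1, min_eq_left hv.2.le]
    · rw [h]
      have hDu : D φs = 0 := by simp only [hDdef]; rw [min_self]; exact hDd0
      rw [hDu]
      have hleft : HasDerivWithinAt (Hsol ν₀ f lam lam0 lam1 c μ w ψ η φs) 0
          (Set.Iic φs) φs := by
        have h1 : HasDerivWithinAt Hfun 0 (Set.Iic φs) φs := by
          have := (hHfd φs hφs).hasDerivWithinAt (s := Set.Iic φs)
          rwa [hDd0] at this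
        apply h1.congr_of_eventuallyEq ?_ (by rw [hHeq φs hφs, min_self])
        filter_upwards [mem_nhdsWithin_of_mem_nhds (isOpen_Ioi.mem_nhds hφs),
          self_mem_nhdsWithin] with v hv1 hv2
        rw [hHeq v hv1, min_eq_left hv2]
      have hright : HasDerivWithinAt (Hsol ν₀ f lam lam0 lam1 c μ w ψ η φs) 0
          (Set.Ici φs) φs := by
        apply (hasDerivWithinAt_const φs (Set.Ici φs) (0:ℝ)).congr
          (fun v hv => hHIci v hv) (hHIci φs Set.self_mem_Ici)
      have := hleft.union hright
      rwa [Set.Iic_union_Ici, hasDerivWithinAt_univ] at this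
    · have hDu : D u = 0 := by
        simp only [hDdef]; rw [min_eq_right h.le]; exact hDd0
      rw [hDu]
      apply (hasDerivAt_const u (0:ℝ)).congr_of_eventuallyEq
      filter_upwards [isOpen_Ioi.mem_nhds (Set.mem_Ioi.2 h)] with v hv
      exact hHIci v (Set.mem_Ici.2 (le_of_lt hv))
  have hHderiv : ∀ u : ℝ, 0 < u →
      deriv (Hsol ν₀ f lam lam0 lam1 c μ w ψ η φs) u = D u := fun u hu => (hHd u hu).deriv
  have hIcont : ContinuousOn I (Set.Ioi 0) :=
    fun u hu => (hId u hu).continuousAt.continuousWithinAt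
  have hJ'cont : ContinuousOn J' (Set.Ioi 0) :=
    fun u hu => (hJ'd u hu).continuousAt.continuousWithinAt
  have hDdcont : ContinuousOn Dd (Set.Ioi 0) :=
    (hψ'cont.mul hJ'cont).add (hη'cont.mul hIcont)
  have hminMaps : Set.MapsTo (fun u : ℝ => min u φs) (Set.Ioi 0) (Set.Ioi 0) :=
    fun u hu => Set.mem_Ioi.2 (lt_min (Set.mem_Ioi.1 hu) hφs)
  have hDcont : ContinuousOn D (Set.Ioi 0) :=
    hDdcont.comp ((continuous_id.min continuous_const).continuousOn) hminMaps
  -- second derivative of the smooth representative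
  set Dd2 : ℝ → ℝ := fun u => deriv (deriv ψ) u * J' u + deriv (deriv η) u * I u -
    (deriv ψ u * η u - ψ u * deriv η u) * rhoWeight μ ψ η u *
      forcingF ν₀ f lam lam0 lam1 c w u with hDd2def
  have hDdd : ∀ u : ℝ, 0 < u → HasDerivAt Dd (Dd2 u) u := by
    intro u hu
    have h1 := ((hψ'd u hu).mul (hJ'd u hu)).add ((hη'd u hu).mul (hId u hu))
    have h2 : HasDerivAt Dd (deriv (deriv ψ) u * J' u + deriv ψ u * -g2 u +
        (deriv (deriv η) u * I u + deriv η u * g1 u)) u := h1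
    convert h2 using 1
    simp only [hDd2def, hg1def, hg2def]
    ring
  have hDd2cont : ContinuousOn Dd2 (Set.Ioi 0) := by
    apply ContinuousOn.sub
    · exact (hψ''cont.mul hJ'cont).add (hη''cont.mul hIcont)
    · exact (((hψ'cont.mul hηcont).sub (hψcont.mul hη'cont)).mul hρcont).mul hFcont
  have hHfunC2 : ContDiffOn ℝ 2 Hfun (Set.Ioi 0) := by
    rw [show (2 : WithTop ℕ∞) = 1 + 1 by norm_num,
      contDiffOn_succ_iff_deriv_of_isOpen isOpen_Ioi]
    refine ⟨fun u hu => (hHfd u hu).differentiableAt.differentiableWithinAt,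
      by intro h; simp at h, ?_⟩
    have e1 : Set.EqOn (deriv Hfun) Dd (Set.Ioi 0) := fun u hu => (hHfd u hu).deriv
    refine ContDiffOn.congr ?_ e1
    rw [show (1 : WithTop ℕ∞) = 0 + 1 by norm_num,
      contDiffOn_succ_iff_deriv_of_isOpen isOpen_Ioi]
    refine ⟨fun u hu => (hDdd u hu).differentiableAt.differentiableWithinAt,
      by intro h; simp at h, ?_⟩
    rw [contDiffOn_zero]
    exact hDd2cont.congr fun u hu => (hDdd u hu).deriv
  -- C¹ regularity of Hsol on (0, ∞)
  have hC1 : ContDiffOn ℝ 1 (Hsol ν₀ f lam lam0 lam1 c μ w ψ η φs) (Set.Ioi 0) := by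
    rw [show (1 : WithTop ℕ∞) = 0 + 1 by norm_num,
      contDiffOn_succ_iff_deriv_of_isOpen isOpen_Ioi]
    refine ⟨fun u hu => (hHd u hu).differentiableAt.differentiableWithinAt,
      by intro h; simp at h, ?_⟩
    rw [contDiffOn_zero]
    exact hDcont.congr fun u hu => hHderiv u hu
  -- C² regularity of Hsol off φs
  have hC2 : ContDiffOn ℝ 2 (Hsol ν₀ f lam lam0 lam1 c μ w ψ η φs)
      (Set.Ioi 0 \ {φs}) := by
    intro x hx
    have hx1 : (0:ℝ) < x := hx.1
    have hx2 : x ≠ φs := hx.2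
    rcases lt_or_gt_of_ne hx2 with h | h
    · have h1 : ContDiffAt ℝ 2 Hfun x := hHfunC2.contDiffAt (isOpen_Ioi.mem_nhds hx1)
      refine (h1.congr_of_eventuallyEq ?_).contDiffWithinAt
      filter_upwards [isOpen_Ioo.mem_nhds (⟨hx1, h⟩ : x ∈ Set.Ioo (0:ℝ) φs)] with v hv
      rw [hHeq v hv.1, min_eq_left hv.2.le]
    · refine (contDiffAt_const (c := (0:ℝ)) |>.congr_of_eventuallyEq ?_).contDiffWithinAt
      filter_upwards [isOpen_Ioi.mem_nhds (Set.mem_Ioi.2 h)] with v hv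
      exact hHIci v (Set.mem_Ici.2 (le_of_lt hv))
  -- negativity of H on (0, φs)
  have hQneg : ∀ φ : ℝ, 0 < φ → φ < φs →
      Hsol ν₀ f lam lam0 lam1 c μ w ψ η φs φ < 0 := by
    intro φ hφ hφφs
    set Q : ℝ → ℝ := fun u => J' u + η u / ψ u * I u with hQdef
    have hQd : ∀ u : ℝ, 0 < u → HasDerivAt Q
        ((deriv η u * ψ u - η u * deriv ψ u) / ψ u ^ 2 * I u) u := by
      intro u hu
      have hψne : ψ u ≠ 0 := ne_of_gt (hψpos u hu)
      have h1 := (hJ'd u hu).add (((hηd u hu).div (hψd u hu) hψne).mul (hId u hu))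
      refine h1.congr_deriv ?_
      simp only [hQdef, hg1def, hg2def, Pi.div_apply]
      field_simp
      ring
    have hQmono : StrictMonoOn Q (Set.Icc φ φs) := by
      apply strictMonoOn_of_deriv_pos (convex_Icc φ φs)
      · intro u hu
        exact (hQd u (lt_of_lt_of_le hφ hu.1)).continuousAt.continuousWithinAt
      · intro u hu
        rw [interior_Icc] at hu
        have hu0 : 0 < u := lt_trans hφ hu.1
        rw [(hQd u hu0).deriv]
        have hIneg : I u < 0 := hneg u hu0 hu.2
        have hBu := hBpos u hu0
        have hψu := hψpos u hu0
        have hre : deriv η u * ψ u - η u * deriv ψ u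
            = -(deriv ψ u * η u - ψ u * deriv η u) := by ring
        rw [hre]
        have h2 : -(deriv ψ u * η u - ψ u * deriv η u) / ψ u ^ 2 < 0 :=
          div_neg_of_neg_of_pos (by linarith) (by positivity)
        exact mul_pos_of_neg_of_neg h2 hIneg
    have hQφs : Q φs = 0 := by
      simp only [hQdef]
      rw [hJ'0, hI0]
      ring
    have hQφ : Q φ < 0 := by
      have := hQmono (Set.left_mem_Icc.2 hφφs.le) (Set.right_mem_Icc.2 hφφs.le) hφφs
      rwa [hQφs] at this
    rw [hHeq φ hφ, min_eq_left hφφs.le]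
    have hψφ := hψpos φ hφ
    have hfac : Hfun φ = ψ φ * Q φ := by
      simp only [hHfdef, hQdef]
      field_simp
    rw [hfac]
    exact mul_neg_of_pos_of_neg hψφ hQφ
  -- the ODE on (0, φs)
  have hODE : ∀ φ : ℝ, 0 < φ → φ < φs →
      μ ^ 2 / 2 * φ ^ 2 * deriv (deriv (Hsol ν₀ f lam lam0 lam1 c μ w ψ η φs)) φ +
        (lam + a * φ) * deriv (Hsol ν₀ f lam lam0 lam1 c μ w ψ η φs) φ -
        (lam + lam0) * Hsol ν₀ f lam lam0 lam1 c μ w ψ η φs φ +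
        forcingF ν₀ f lam lam0 lam1 c w φ = 0 := by
    intro φ hφ hφφs
    have h1 : deriv (Hsol ν₀ f lam lam0 lam1 c μ w ψ η φs) φ = Dd φ := by
      rw [hHderiv φ hφ]
      simp only [hDdef]
      rw [min_eq_left hφφs.le]
    have h2 : deriv (deriv (Hsol ν₀ f lam lam0 lam1 c μ w ψ η φs)) φ = Dd2 φ := by
      have hev : deriv (Hsol ν₀ f lam lam0 lam1 c μ w ψ η φs) =ᶠ[nhds φ] Dd := by
        filter_upwards [isOpen_Ioo.mem_nhds (⟨hφ, hφφs⟩ : φ ∈ Set.Ioo (0:ℝ) φs)] with v hv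
        rw [hHderiv v hv.1]
        simp only [hDdef]
        rw [min_eq_left hv.2.le]
      rw [hev.deriv_eq, (hDdd φ hφ).deriv]
    have h3 : Hsol ν₀ f lam lam0 lam1 c μ w ψ η φs φ = Hfun φ := by
      rw [hHeq φ hφ, min_eq_left hφφs.le]
    rw [h1, h2, h3]
    have e1 := hψode φ hφ
    have e2 := hηode φ hφ
    have hBφ := hBpos φ hφ
    have hXne : μ ^ 2 * φ ^ 2 * (deriv ψ φ * η φ - ψ φ * deriv η φ) ≠ 0 := by positivity
    have hρval : rhoWeight μ ψ η φ *
        (μ ^ 2 * φ ^ 2 * (deriv ψ φ * η φ - ψ φ * deriv η φ)) = 2 := by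
      unfold rhoWeight
      exact div_mul_cancel₀ 2 hXne
    simp only [hDd2def, hDddef, hHfdef]
    linear_combination J' φ * e1 + I φ * e2 -
      (forcingF ν₀ f lam lam0 lam1 c w φ / 2) * hρval
  -- positivity of F beyond φs
  have hGφs : 0 ≤ G φs := by
    by_contra hcon
    push_neg at hcon
    have hneg' : ∀ z ∈ Set.Ioo (0:ℝ) φs, g1 z < 0 := by
      intro z hz
      have hFz : forcingF ν₀ f lam lam0 lam1 c w z < 0 := by
        rw [hFeqG z hz.1.le]
        have h1 := hGmono z φs hz.1.le hz.2.le
        have hz2 : z < φs := hz.2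
        linarith
      simp only [hg1def]
      exact mul_neg_of_pos_of_neg (mul_pos (hψpos z hz.1) (hρpos z hz.1)) hFz
    have hpos : 0 < ∫ z in Set.Ioo (0:ℝ) φs, -g1 z := by
      rw [setIntegral_pos_iff_support_of_nonneg_ae]
      · refine lt_of_lt_of_le ?_ (measure_mono (s := Set.Ioo (0:ℝ) φs) ?_)
        · rw [Real.volume_Ioo]
          rw [ENNReal.ofReal_pos]
          linarith
        · intro z hz
          refine ⟨?_, hz⟩
          rw [Function.mem_support]
          exact ne_of_gt (neg_pos.2 (hneg' z hz))
      · filter_upwards [ae_restrict_mem measurableSet_Ioo] with z hz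
        exact (neg_pos.2 (hneg' z hz)).le
      · exact (hg1int φs hφs).neg
    rw [integral_neg] at hpos
    have hlt : (∫ z in Set.Ioo (0:ℝ) φs, g1 z) < 0 := by linarith
    rw [hroot] at hlt
    exact lt_irrefl 0 hlt
  have hFpos : ∀ φ : ℝ, φs < φ → 0 < forcingF ν₀ f lam lam0 lam1 c w φ := by
    intro φ hφ
    rw [hFeqG φ (le_of_lt (hφs.trans hφ))]
    have := hGmono φs φ hφs.le hφ.le
    linarith
  refine ⟨fun φ hφ _ => ⟨hg1int φ hφ, hg2int φ hφ⟩, hC1, hC2, hHφs, ?_, hQneg, hODE, hFpos⟩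
  rw [hHderiv φs hφs]
  simp only [hDdef]
  rw [min_self]
  exact hDd0
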